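/- Every Lagrangian Lie subalgebra l of d = g ⋉ g* (i.e., a Lie subalgebra that is isotropic of dimension dim g for the form ((x,α),(y,β)) = α(y) + β(x)) is of the form l(a,f) for some Lie subalgebra a of g and some skew cocycle f ∈ Z¹(a, a*); explicitly, a is the image of l under the first projection and f is determined by f(x) = α|_a for (x,α) ∈ l. -/

import Mathlib

open Module LieAlgebra

variable {g : Type*} [LieRing g] [LieAlgebra ℂ g] [FiniteDimensional ℂ g]

/-- Coadjoint action of `g` on its dual. -/
noncomputable def coad (x : g) (β : Dual ℂ g) : Dual ℂ g :=
  -(β ∘ₗ (ad ℂ g x : g →ₗ[ℂ] g))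

/-- The bracket of `d = g ⋉ g*`. -/
noncomputable def dBracket (u v : g × Dual ℂ g) : g × Dual ℂ g :=
  (⁅u.1, v.1⁆, coad u.1 v.2 - coad v.1 u.2)

/-- The symmetric bilinear form `((x,α),(y,β)) = α(y) + β(x)` on `d`. -/
def dForm (u v : g × Dual ℂ g) : ℂ := u.2 v.1 + v.2 u.1

/-- Coadjoint action of a Lie subalgebra `a` on `a*`. -/
noncomputable def coadA (a : LieSubalgebra ℂ g) (x : a) (φ : Dual ℂ a) : Dual ℂ a :=
  -(φ ∘ₗ (ad ℂ a x : a →ₗ[ℂ] a))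

/-- `l(a,f) = {(x,α) : x ∈ a, α|_a = f(x)}`. -/
def lSet (a : LieSubalgebra ℂ g) (f : a →ₗ[ℂ] Dual ℂ a) : Set (g × Dual ℂ g) :=
  {p | ∃ x : a, p.1 = ↑x ∧ ∀ y : a, p.2 ↑y = f x y}

/-- Karolinsky–Stolin: every Lagrangian subalgebra `W` of `d = g ⋉ g*` (a subspace that is
closed under the bracket, isotropic, and of dimension `dim g`) is of the form `l(a,f)` for a
Lie subalgebra `a` of `g` and a skew cocycle `f ∈ Z¹(a,a*)`; moreover `a` is the image of `W`
under the first projection (and `f` is determined by `f(x) = α|_a` for `(x,α) ∈ W`, which is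
implied by `W = l(a,f)`). -/
theorem lagrangian_subalgebra_eq_lSet (W : Submodule ℂ (g × Dual ℂ g))
    (hbr : ∀ u ∈ W, ∀ v ∈ W, dBracket u v ∈ W)
    (hiso : ∀ u ∈ W, ∀ v ∈ W, dForm u v = 0)
    (hdim : Module.finrank ℂ W = Module.finrank ℂ g) :
    ∃ (a : LieSubalgebra ℂ g) (f : a →ₗ[ℂ] Dual ℂ a),
      (∀ x y : a, coadA a x (f y) - coadA a y (f x) - f ⁅x, y⁆ = 0) ∧
      (∀ x y : a, f x y + f y x = 0) ∧
      (W : Set (g × Dual ℂ g)) = lSet a f ∧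
      (a : Set g) = Prod.fst '' (W : Set (g × Dual ℂ g)) := by
  classical
  set A : Submodule ℂ g := W.map (LinearMap.fst ℂ g (Dual ℂ g)) with hAdef
  have hAbr : ∀ x ∈ A, ∀ y ∈ A, ⁅x, y⁆ ∈ A := by
    rintro x ⟨u, hu, rfl⟩ y ⟨v, hv, rfl⟩
    exact ⟨dBracket u v, hbr u hu v hv, rfl⟩
  let a : LieSubalgebra ℂ g := { A with lie_mem' := fun {x y} hx hy => hAbr x hx y hy }
  -- the projection p : W → A
  have hp0mem : ∀ u : W, (u : g × Dual ℂ g).1 ∈ A := fun u => ⟨(u : g × Dual ℂ g), u.2, rfl⟩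
  let p : W →ₗ[ℂ] A :=
    ((LinearMap.fst ℂ g (Dual ℂ g)).comp W.subtype).codRestrict A hp0mem
  have hp : ∀ u : W, (p u : g) = (u : g × Dual ℂ g).1 := fun u => rfl
  let r : Dual ℂ g →ₗ[ℂ] Dual ℂ A := A.subtype.dualMap
  have hr : ∀ (β : Dual ℂ g) (y : A), r β y = β ↑y := fun β y => rfl
  let F : W →ₗ[ℂ] Dual ℂ A := r.comp ((LinearMap.snd ℂ g (Dual ℂ g)).comp W.subtype)
  have hF : ∀ (u : W) (y : A), F u y = (u : g × Dual ℂ g).2 ↑y := fun u y => rfl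
  have hpsurj : LinearMap.range p = ⊤ := by
    rw [LinearMap.range_eq_top]
    rintro ⟨x, hx⟩
    obtain ⟨u, hu, hx'⟩ := hx
    exact ⟨⟨u, hu⟩, Subtype.ext hx'⟩
  obtain ⟨q, hq⟩ := p.exists_rightInverse_of_surjective hpsurj
  have hq' : ∀ x : A, p (q x) = x := fun x => by
    have := LinearMap.ext_iff.mp hq x
    simpa using this
  let f : A →ₗ[ℂ] Dual ℂ A := F.comp q
  have hf : ∀ (x : A) (y : A), f x y = ((q x : W) : g × Dual ℂ g).2 ↑y := fun x y => rfl
  -- well-definedness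
  have wd : ∀ u : W, (u : g × Dual ℂ g).1 = 0 →
      ∀ y : A, (u : g × Dual ℂ g).2 ↑y = 0 := by
    rintro u hu ⟨y, v, hv, rfl⟩
    have h := hiso u u.2 v hv
    simp only [dForm, hu, map_zero, add_zero] at h
    exact h
  have key : ∀ u : W, ∀ y : A, f (p u) y = (u : g × Dual ℂ g).2 ↑y := by
    intro u y
    have h1 : p (q (p u) - u) = 0 := by rw [map_sub, hq' (p u), sub_self]
    have h2 : ((q (p u) - u : W) : g × Dual ℂ g).1 = 0 := by
      have := congrArg (Subtype.val) h1
      simpa [hp] using this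
    have h3 := wd (q (p u) - u) h2 y
    have h4 : ((q (p u) : W) : g × Dual ℂ g).2 ↑y - (u : g × Dual ℂ g).2 ↑y = 0 := by
      simpa using h3
    have := sub_eq_zero.mp h4
    rw [hf, this]
  -- skewness
  have skew : ∀ x y : A, f x y + f y x = 0 := by
    intro x y
    have h := hiso (q x) (q x).2 (q y) (q y).2
    have hx1 : ((q x : W) : g × Dual ℂ g).1 = (x : g) := by
      rw [← hp (q x), hq' x]
    have hy1 : ((q y : W) : g × Dual ℂ g).1 = (y : g) := by
      rw [← hp (q y), hq' y]
    have e1 : f x y = ((q x : W) : g × Dual ℂ g).2 ↑y := hf x y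
    have e2 : f y x = ((q y : W) : g × Dual ℂ g).2 ↑x := hf y x
    rw [e1, e2]
    simpa [dForm, hx1, hy1] using h
  -- f evaluated via any representative
  have key' : ∀ (x : A) (z : A), f x z = ((q x : W) : g × Dual ℂ g).2 ↑z := hf
  -- cocycle
  have cocycle : ∀ x y : a, coadA a x (f y) - coadA a y (f x) - f ⁅x, y⁆ = 0 := by
    intro x y
    have hx1 : ((q x : W) : g × Dual ℂ g).1 = (x : g) := by rw [← hp (q x), hq' x]
    have hy1 : ((q y : W) : g × Dual ℂ g).1 = (y : g) := by rw [← hp (q y), hq' y]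
    set u : W := q x with hu
    set v : W := q y with hv
    have hwmem : dBracket ↑u ↑v ∈ W := hbr ↑u u.2 ↑v v.2
    let w : W := ⟨dBracket ↑u ↑v, hwmem⟩
    have hpw : p w = (⁅x, y⁆ : ↥a) := by
      apply Subtype.ext
      show ((w : g × Dual ℂ g)).1 = ((⁅x, y⁆ : a) : g)
      show ⁅(u : g × Dual ℂ g).1, (v : g × Dual ℂ g).1⁆ = ((⁅x, y⁆ : a) : g)
      rw [hx1, hy1]
      rfl
    apply LinearMap.ext
    intro z
    have hbz : f (⁅x, y⁆ : ↥a) z = ((w : W) : g × Dual ℂ g).2 ↑z := by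
      rw [← hpw]; exact key w z
    have hw2 : ((w : W) : g × Dual ℂ g).2 ↑z
        = -((v : g × Dual ℂ g).2 ⁅(x : g), (z : g)⁆)
          + ((u : g × Dual ℂ g).2 ⁅(y : g), (z : g)⁆) := by
      show (coad (u : g × Dual ℂ g).1 (v : g × Dual ℂ g).2
        - coad (v : g × Dual ℂ g).1 (u : g × Dual ℂ g).2) ↑z = _
      rw [hx1, hy1]
      simp [coad, ad_apply]
    have hca1 : coadA a x (f y) z = -(f y ⁅x, z⁆) := rfl
    have hca2 : coadA a y (f x) z = -(f x ⁅y, z⁆) := rfl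
    have hfy : f y ⁅x, z⁆ = (v : g × Dual ℂ g).2 ⁅(x : g), (z : g)⁆ := hf y ⁅x, z⁆
    have hfx : f x ⁅y, z⁆ = (u : g × Dual ℂ g).2 ⁅(y : g), (z : g)⁆ := hf x ⁅y, z⁆
    simp only [LinearMap.sub_apply, LinearMap.zero_apply, hca1, hca2, hw2, hfy, hfx]
    have hfin : f (⁅x, y⁆ : ↥a) z
        = -((v : g × Dual ℂ g).2 ⁅(x : g), (z : g)⁆)
          - -((u : g × Dual ℂ g).2 ⁅(y : g), (z : g)⁆) := by
      rw [hbz, hw2]; ring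
    rw [sub_eq_zero]
    exact hfin.symm
  -- the complement and extended comparison submodule
  obtain ⟨B, hB⟩ := Submodule.exists_isCompl A
  let π : g →ₗ[ℂ] A := A.linearProjOfIsCompl B hB
  have hπ : ∀ x : A, π ↑x = x := fun x => Submodule.linearProjOfIsCompl_apply_left hB x
  let Φ : (g × Dual ℂ g) →ₗ[ℂ] Dual ℂ A :=
    r.comp (LinearMap.snd ℂ g (Dual ℂ g)) - f.comp (π.comp (LinearMap.fst ℂ g (Dual ℂ g)))
  have hΦ : ∀ (u : g × Dual ℂ g) (y : A), Φ u y = u.2 ↑y - f (π u.1) y := fun u y => rfl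
  let L : Submodule ℂ (g × Dual ℂ g) :=
    A.comap (LinearMap.fst ℂ g (Dual ℂ g)) ⊓ LinearMap.ker Φ
  have hWL : W ≤ L := by
    intro u hu
    refine ⟨⟨u, hu, rfl⟩, ?_⟩
    show Φ u = 0
    apply LinearMap.ext
    intro y
    rw [hΦ]
    have hu1 : u.1 = ((p ⟨u, hu⟩ : A) : g) := rfl
    rw [hu1, hπ, key ⟨u, hu⟩ y]
    simp
  -- dimension bound
  have hrsurj : Function.Surjective r :=
    LinearMap.dualMap_surjective_of_injective A.injective_subtype
  have hkerdim : finrank ℂ A + finrank ℂ (LinearMap.ker r) = finrank ℂ g := by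
    have h1 := r.finrank_range_add_finrank_ker
    rw [LinearMap.range_eq_top.mpr hrsurj, finrank_top] at h1
    rw [Subspace.dual_finrank_eq, Subspace.dual_finrank_eq] at h1
    exact h1
  let θ : L →ₗ[ℂ] g := (LinearMap.fst ℂ g (Dual ℂ g)).comp L.subtype
  have hrangeθ : finrank ℂ (LinearMap.range θ) ≤ finrank ℂ A := by
    apply Submodule.finrank_mono
    rintro x ⟨u, rfl⟩
    exact u.2.1
  have hkerθ : finrank ℂ (LinearMap.ker θ) ≤ finrank ℂ (LinearMap.ker r) := by
    have : ∀ u : LinearMap.ker θ, ((u : L) : g × Dual ℂ g).2 ∈ LinearMap.ker r := by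
      intro u
      have hu1 : ((u : L) : g × Dual ℂ g).1 = 0 := u.2
      have hΦu : Φ ((u : L) : g × Dual ℂ g) = 0 := (u : L).2.2
      rw [LinearMap.mem_ker]
      apply LinearMap.ext
      intro y
      have := LinearMap.ext_iff.mp hΦu y
      rw [hΦ, hu1] at this
      simpa [hr] using this
    let ι : LinearMap.ker θ →ₗ[ℂ] LinearMap.ker r :=
      (((LinearMap.snd ℂ g (Dual ℂ g)).comp L.subtype).comp
        (LinearMap.ker θ).subtype).codRestrict (LinearMap.ker r) this
    have hι : Function.Injective ι := by
      intro u v huv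
      have h2 : ((u : L) : g × Dual ℂ g).2 = ((v : L) : g × Dual ℂ g).2 :=
        congrArg Subtype.val huv
      have h1 : ((u : L) : g × Dual ℂ g).1 = ((v : L) : g × Dual ℂ g).1 :=
        (LinearMap.mem_ker.mp u.2).trans (LinearMap.mem_ker.mp v.2).symm
      exact Subtype.ext (Subtype.ext (Prod.ext h1 h2))
    exact LinearMap.finrank_le_finrank_of_injective hι
  have hLdim : finrank ℂ L ≤ finrank ℂ g := by
    have h1 := θ.finrank_range_add_finrank_ker
    omega
  have hWLeq : W = L := Submodule.eq_of_le_of_finrank_le hWL (hdim ▸ hLdim)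
  refine ⟨a, f, cocycle, skew, ?_, ?_⟩
  · rw [show (W : Set (g × Dual ℂ g)) = (L : Set (g × Dual ℂ g)) from congrArg _ hWLeq]
    ext u
    constructor
    · rintro ⟨h1, h2⟩
      have h1' : u.1 ∈ A := h1
      refine ⟨⟨u.1, h1'⟩, rfl, ?_⟩
      intro y
      have := LinearMap.ext_iff.mp (h2 : Φ u = 0) y
      rw [hΦ] at this
      have hπu : π u.1 = ⟨u.1, h1'⟩ := hπ ⟨u.1, h1'⟩
      rw [hπu] at this
      simpa [sub_eq_zero] using this
    · rintro ⟨x, hx1, hx2⟩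
      refine ⟨show u.1 ∈ A by rw [hx1]; exact x.2, ?_⟩
      show Φ u = 0
      apply LinearMap.ext
      intro y
      rw [hΦ, hx1, hπ x, hx2 y]
      exact sub_self _
  · show (A : Set g) = _
    rw [hAdef, Submodule.map_coe]
    rfl
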